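/- arXiv:2508.18759 — 2 statements merged into one kernel-verified Lean document; each statement's English description precedes it below -/
import Mathlib

section
/- Fix natural numbers d ≤ n. Then there exist constants C₁, C₂ > 0 such that for every linear d-simplex Δ in ℝⁿ with vertices v₀, …, v_d and every ζ > 0 satisfying ζ < min{r_min(Δ)/2, 1/Λ(Δ)}, the set 𝒟(Δ, ζ) = { Gr(⟨v₀', …, v_d'⟩) : |v_i' − v_i| < ζ for all i, and v₀', …, v_d' affinely independent } ⊆ Gr(n,d) satisfies: (i) every d-dimensional subspace D of ℝⁿ with d_proj(Gr(Δ), D) < C₁ ζ / r_max(Δ) belongs to 𝒟(Δ, ζ), and (ii) every D ∈ 𝒟(Δ, ζ) satisfies d_proj(Gr(Δ), D) < C₂ ζ Λ(Δ). -/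
noncomputable section

open Metric Set

/-- Two linear subspaces of ℝⁿ are transverse if the dimension of their span is maximal. -/
def Transv {n : ℕ} (V W : Submodule ℝ (EuclideanSpace ℝ (Fin n))) : Prop :=
  Module.finrank ℝ ↥(V ⊔ W) = min (Module.finrank ℝ ↥V + Module.finrank ℝ ↥W) n

/-- The space of directions of the affine span of a family of points (Gr(Δ)). -/
def simplexDir {n m : ℕ} (v : Fin m → EuclideanSpace ℝ (Fin n)) :
    Submodule ℝ (EuclideanSpace ℝ (Fin n)) :=
  (affineSpan ℝ (Set.range v)).direction

/-- Orthogonal projection of ℝⁿ onto the orthogonal complement of V, as a map ℝⁿ → ℝⁿ. -/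
def projPerp {n : ℕ} (V : Submodule ℝ (EuclideanSpace ℝ (Fin n)))
    (x : EuclideanSpace ℝ (Fin n)) : EuclideanSpace ℝ (Fin n) :=
  (Vᗮ.orthogonalProjectionOnto x : EuclideanSpace ℝ (Fin n))

/-- Orthogonal projection onto V as a continuous linear endomorphism of ℝⁿ. -/
def projCL {n : ℕ} (V : Submodule ℝ (EuclideanSpace ℝ (Fin n))) :
    EuclideanSpace ℝ (Fin n) →L[ℝ] EuclideanSpace ℝ (Fin n) :=
  V.subtypeL.comp (V.orthogonalProjectionOnto)

/-- Operator-norm distance between orthogonal projections. -/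
def dProj {n : ℕ} (V W : Submodule ℝ (EuclideanSpace ℝ (Fin n))) : ℝ :=
  ‖projCL V - projCL W‖

/-- `p⋆Δ` is `δ`-semitransverse to `𝔉(V)` in `p`. -/
def SemiT {n m : ℕ} (δ : ℝ) (p : EuclideanSpace ℝ (Fin n))
    (v : Fin m → EuclideanSpace ℝ (Fin n))
    (V : Submodule ℝ (EuclideanSpace ℝ (Fin n))) : Prop :=
  ∀ p' : EuclideanSpace ℝ (Fin n), dist p' p < δ →
    AffineIndependent ℝ (Fin.cons p' v : Fin (m+1) → EuclideanSpace ℝ (Fin n)) ∧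
    Transv (simplexDir (Fin.cons p' v : Fin (m+1) → EuclideanSpace ℝ (Fin n))) V

/-- Maximal distance between two vertices of a simplex. -/
def rMax {n m : ℕ} (v : Fin m → EuclideanSpace ℝ (Fin n)) : ℝ :=
  ⨆ i, ⨆ j, dist (v i) (v j)

/-- Minimal distance between a vertex and the affine span of the opposite face. -/
def rMin {n m : ℕ} (v : Fin m → EuclideanSpace ℝ (Fin n)) : ℝ :=
  ⨅ i, Metric.infDist (v i) (affineSpan ℝ (v '' {i}ᶜ) : Set (EuclideanSpace ℝ (Fin n)))

/-- The degeneracy quantity Λ(Δ). -/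
def Lam {n m : ℕ} (v : Fin (m+1) → EuclideanSpace ℝ (Fin n)) : ℝ :=
  sSup {t : ℝ | ∃ lam : Fin m → ℝ,
    ‖∑ i, lam i • (v i.succ - v 0)‖ = 1 ∧ ∃ i, t = |lam i|}

/-- ε-transversality of a simplex with vertices `v` to the constant foliation `𝔉(V)`. -/
def EpsT {n m : ℕ} (ε : ℝ) (v : Fin (m+1) → EuclideanSpace ℝ (Fin n))
    (V : Submodule ℝ (EuclideanSpace ℝ (Fin n))) : Prop :=
  ∀ D : Submodule ℝ (EuclideanSpace ℝ (Fin n)),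
    Module.finrank ℝ ↥D = m → dProj (simplexDir v) D < ε → Transv D V

/-- δ-semitransversality of a simplex in its `i`-th vertex. -/
def STat {n m : ℕ} (δ : ℝ) (w : Fin m → EuclideanSpace ℝ (Fin n)) (i : Fin m)
    (V : Submodule ℝ (EuclideanSpace ℝ (Fin n))) : Prop :=
  ∀ p' : EuclideanSpace ℝ (Fin n), dist p' (w i) < δ →
    AffineIndependent ℝ (Function.update w i p') ∧
    Transv (simplexDir (Function.update w i p')) V

/-- The coordinate subspace ℝᵏ × {0} of ℝⁿ. -/
def stdFol (n k : ℕ) : Submodule ℝ (EuclideanSpace ℝ (Fin n)) where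
  carrier := {x | ∀ i : Fin n, k ≤ (i : ℕ) → x i = 0}
  zero_mem' := fun i _ => rfl
  add_mem' := by
    intro x y hx hy i hi
    show x i + y i = 0
    rw [hx i hi, hy i hi, add_zero]
  smul_mem' := by
    intro c x hx i hi
    show c * x i = 0
    rw [hx i hi, mul_zero]

/-- Graph of a linear map V → V⊥ as a subspace of ℝⁿ. -/
def graphOf {n : ℕ} {V : Submodule ℝ (EuclideanSpace ℝ (Fin n))}
    (T : ↥V →L[ℝ] ↥Vᗮ) : Submodule ℝ (EuclideanSpace ℝ (Fin n)) :=
  LinearMap.range (V.subtype + Vᗮ.subtype.comp T.toLinearMap)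


set_option maxHeartbeats 1000000

section Helpers

variable {n k : ℕ}

lemma projCL_mem (V : Submodule ℝ (EuclideanSpace ℝ (Fin n))) (x : EuclideanSpace ℝ (Fin n)) :
    projCL V x ∈ V := (V.orthogonalProjectionOnto x).2

lemma projCL_of_mem {V : Submodule ℝ (EuclideanSpace ℝ (Fin n))} {x : EuclideanSpace ℝ (Fin n)}
    (hx : x ∈ V) : projCL V x = x := by
  exact (Submodule.starProjection_eq_self_iff (K := V)).mpr hx

lemma norm_projCL_apply_le (V : Submodule ℝ (EuclideanSpace ℝ (Fin n)))
    (x : EuclideanSpace ℝ (Fin n)) : ‖projCL V x‖ ≤ ‖x‖ := by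
  have h : ‖V.orthogonalProjectionOnto x‖ ≤ ‖V.orthogonalProjectionOnto‖ * ‖x‖ :=
    (V.orthogonalProjectionOnto).le_opNorm x
  have h2 := Submodule.orthogonalProjectionOnto_norm_le V
  have : ‖projCL V x‖ = ‖V.orthogonalProjectionOnto x‖ := rfl
  rw [this]
  nlinarith [norm_nonneg x]

lemma norm_projCL_le (V : Submodule ℝ (EuclideanSpace ℝ (Fin n))) : ‖projCL V‖ ≤ 1 :=
  ContinuousLinearMap.opNorm_le_bound _ zero_le_one
    (fun x => by simpa using norm_projCL_apply_le V x)

lemma norm_sub_projCL_le (V : Submodule ℝ (EuclideanSpace ℝ (Fin n)))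
    (x : EuclideanSpace ℝ (Fin n)) {y : EuclideanSpace ℝ (Fin n)} (hy : y ∈ V) :
    ‖x - projCL V x‖ ≤ ‖x - y‖ := by
  have h : ‖x - projCL V x‖ = ⨅ z : V, ‖x - z‖ := Submodule.starProjection_minimal x
  rw [h]
  exact ciInf_le ⟨0, fun t ⟨z, hz⟩ => hz ▸ norm_nonneg _⟩ (⟨y, hy⟩ : V)

lemma dProj_le_two (V W : Submodule ℝ (EuclideanSpace ℝ (Fin n))) : dProj V W ≤ 2 := by
  have := norm_sub_le (projCL V) (projCL W)
  have h1 := norm_projCL_le V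
  have h2 := norm_projCL_le W
  unfold dProj; linarith

lemma dProj_le_three_mul {V W : Submodule ℝ (EuclideanSpace ℝ (Fin n))} {δ : ℝ}
    (hrk : Module.finrank ℝ V = Module.finrank ℝ W) (hδ0 : 0 ≤ δ) (hδ : δ ≤ 1/2)
    (hA : ∀ y ∈ V, ‖y - projCL W y‖ ≤ δ * ‖y‖) :
    dProj V W ≤ 3 * δ := by
  have hB : ∀ w ∈ W, ‖w - projCL V w‖ ≤ 2 * δ * ‖w‖ := by
    intro w hw
    set f : V →ₗ[ℝ] W := (W.orthogonalProjectionOnto).toLinearMap.comp V.subtype with hf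
    have hinj : Function.Injective f := by
      rw [← LinearMap.ker_eq_bot, Submodule.eq_bot_iff]
      rintro ⟨y, hy⟩ hker
      have h0 : projCL W y = 0 := by
        have : W.orthogonalProjectionOnto y = 0 := hker
        simp [projCL, this]
      have := hA y hy
      rw [h0, sub_zero] at this
      have hy0 : y = 0 := by
        by_contra hne
        have : (0:ℝ) < ‖y‖ := norm_pos_iff.mpr hne
        nlinarith
      exact Subtype.ext hy0
    have hsurj : Function.Surjective f :=
      (LinearMap.injective_iff_surjective_of_finrank_eq_finrank hrk).mp hinj
    obtain ⟨⟨y, hy⟩, hfy⟩ := hsurj ⟨w, hw⟩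
    have hyw : projCL W y = w := by
      have : (W.orthogonalProjectionOnto y : EuclideanSpace ℝ (Fin n)) = w := congrArg Subtype.val hfy
      simpa [projCL] using this
    have h1 : ‖y - w‖ ≤ δ * ‖y‖ := by rw [← hyw]; exact hA y hy
    have h2 : ‖y‖ ≤ 2 * ‖w‖ := by
      have := norm_sub_norm_le y w
      nlinarith [norm_nonneg y, norm_nonneg w]
    calc ‖w - projCL V w‖ ≤ ‖w - y‖ := norm_sub_projCL_le V w hy
      _ = ‖y - w‖ := by rw [norm_sub_rev]
      _ ≤ δ * ‖y‖ := h1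
      _ ≤ 2 * δ * ‖w‖ := by nlinarith [norm_nonneg w]
  have hC : projCL V - projCL W =
      (1 - projCL W).comp (projCL V) - (projCL W).comp (1 - projCL V) := by
    refine ContinuousLinearMap.ext fun x => ?_
    simp only [ContinuousLinearMap.comp_apply, ContinuousLinearMap.sub_apply,
      ContinuousLinearMap.one_apply, map_sub]
    abel
  have hn1 : ‖(1 - projCL W).comp (projCL V)‖ ≤ δ := by
    refine ContinuousLinearMap.opNorm_le_bound _ hδ0 (fun x => ?_)
    have h := hA (projCL V x) (projCL_mem V x)
    have : ‖projCL V x - projCL W (projCL V x)‖ ≤ δ * ‖x‖ := by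
      refine h.trans ?_
      nlinarith [norm_projCL_apply_le V x, norm_nonneg x]
    simpa [ContinuousLinearMap.comp_apply, ContinuousLinearMap.sub_apply] using this
  have hn2 : ‖(projCL W).comp (1 - projCL V)‖ ≤ 2 * δ := by
    have hadj : ContinuousLinearMap.adjoint ((1 - projCL V).comp (projCL W)) =
        (projCL W).comp (1 - projCL V) := by
      rw [ContinuousLinearMap.adjoint_comp]
      have hV : ContinuousLinearMap.adjoint (projCL V) = projCL V :=
        ContinuousLinearMap.isSelfAdjoint_iff'.mp (isSelfAdjoint_starProjection V)
      have hW : ContinuousLinearMap.adjoint (projCL W) = projCL W :=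
        ContinuousLinearMap.isSelfAdjoint_iff'.mp (isSelfAdjoint_starProjection W)
      have hone : ContinuousLinearMap.adjoint
          (1 : EuclideanSpace ℝ (Fin n) →L[ℝ] EuclideanSpace ℝ (Fin n)) = 1 :=
        ContinuousLinearMap.adjoint_id
      rw [map_sub, hV, hW, hone]
    rw [← hadj, ContinuousLinearMap.adjoint.norm_map]
    refine ContinuousLinearMap.opNorm_le_bound _ (by linarith) (fun x => ?_)
    have h := hB (projCL W x) (projCL_mem W x)
    have : ‖projCL W x - projCL V (projCL W x)‖ ≤ 2 * δ * ‖x‖ := by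
      refine h.trans ?_
      nlinarith [norm_projCL_apply_le W x, norm_nonneg x]
    simpa [ContinuousLinearMap.comp_apply, ContinuousLinearMap.sub_apply] using this
  calc dProj V W = ‖projCL V - projCL W‖ := rfl
    _ ≤ ‖(1 - projCL W).comp (projCL V)‖ + ‖(projCL W).comp (1 - projCL V)‖ := by
        rw [hC]; exact norm_sub_le _ _
    _ ≤ 3 * δ := by linarith

lemma li_w {v : Fin (k+2) → EuclideanSpace ℝ (Fin n)} (hv : AffineIndependent ℝ v) :
    LinearIndependent ℝ (fun i : Fin (k+1) => v i.succ - v 0) := by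
  rw [affineIndependent_iff_linearIndependent_vsub ℝ v 0] at hv
  have h := hv.comp
    (fun i : Fin (k+1) => (⟨i.succ, Fin.succ_ne_zero i⟩ : {x : Fin (k+2) // x ≠ 0}))
    (fun i j hij => Fin.succ_injective _ (congrArg Subtype.val hij))
  simpa [Function.comp_def, vsub_eq_sub] using h

lemma simplexDir_eq_span (v : Fin (k+2) → EuclideanSpace ℝ (Fin n)) :
    simplexDir v = Submodule.span ℝ (Set.range (fun i : Fin (k+1) => v i.succ - v 0)) := by
  rw [simplexDir, direction_affineSpan, vectorSpan_range_eq_span_range_vsub_right ℝ v 0]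
  have hfun : (fun i : Fin (k+2) => v i -ᵥ v 0) =
      Fin.cons 0 (fun i : Fin (k+1) => v i.succ - v 0) := by
    funext i
    refine Fin.cases ?_ (fun j => ?_) i <;> simp [vsub_eq_sub]
  rw [hfun, Fin.range_cons, Submodule.span_insert_zero]

lemma finrank_simplexDir {v : Fin (k+2) → EuclideanSpace ℝ (Fin n)}
    (hv : AffineIndependent ℝ v) : Module.finrank ℝ (simplexDir v) = k + 1 := by
  rw [simplexDir, direction_affineSpan]
  exact hv.finrank_vectorSpan (by simp)

lemma mem_simplexDir_diff (v : Fin (k+2) → EuclideanSpace ℝ (Fin n)) (i : Fin (k+2)) :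
    v i - v 0 ∈ simplexDir v := by
  have h1 : v i ∈ affineSpan ℝ (Set.range v) := subset_affineSpan ℝ _ (mem_range_self i)
  have h0 : v 0 ∈ affineSpan ℝ (Set.range v) := subset_affineSpan ℝ _ (mem_range_self 0)
  simpa [simplexDir, vsub_eq_sub] using AffineSubspace.vsub_mem_direction h1 h0

lemma bddAbove_lamSet {v : Fin (k+2) → EuclideanSpace ℝ (Fin n)}
    (hv : AffineIndependent ℝ v) :
    BddAbove {t : ℝ | ∃ lam : Fin (k+1) → ℝ,
      ‖∑ i, lam i • (v i.succ - v 0)‖ = 1 ∧ ∃ i, t = |lam i|} := by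
  classical
  set w : Fin (k+1) → EuclideanSpace ℝ (Fin n) := fun i => v i.succ - v 0 with hwdef
  have hw : LinearIndependent ℝ w := li_w hv
  set b : Module.Basis (Fin (k+1)) ℝ (Submodule.span ℝ (Set.range w)) := Module.Basis.span hw with hbdef
  set T : Fin (k+1) → (Submodule.span ℝ (Set.range w) →L[ℝ] ℝ) :=
    fun i => LinearMap.toContinuousLinearMap (b.coord i) with hTdef
  refine ⟨∑ i, ‖T i‖, ?_⟩
  rintro t ⟨lam, h1, i, rfl⟩
  have hmem : ∀ j, w j ∈ Submodule.span ℝ (Set.range w) :=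
    fun j => Submodule.subset_span (mem_range_self j)
  set yv : Submodule.span ℝ (Set.range w) := ∑ j, lam j • b j with hyv
  have hcoe : (yv : EuclideanSpace ℝ (Fin n)) = ∑ j, lam j • w j := by
    rw [hyv]
    push_cast
    refine Finset.sum_congr rfl (fun j _ => ?_)
    rw [Module.Basis.span_apply]
  have hrepr : b.repr yv = lam := by
    rw [hyv, b.repr_sum_self]
  have hnorm : ‖yv‖ = 1 := by
    rw [← h1, ← hcoe]
    rfl
  have : |lam i| = |T i yv| := by
    rw [hTdef]
    simp only [LinearMap.coe_toContinuousLinearMap', Module.Basis.coord_apply, hrepr]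
  rw [this]
  calc |T i yv| ≤ ‖T i‖ * ‖yv‖ := (T i).le_opNorm yv
    _ = ‖T i‖ := by rw [hnorm, mul_one]
    _ ≤ ∑ j, ‖T j‖ := Finset.single_le_sum (fun j _ => norm_nonneg (T j)) (Finset.mem_univ i)

lemma coords_bound {v : Fin (k+2) → EuclideanSpace ℝ (Fin n)}
    (hv : AffineIndependent ℝ v) {y : EuclideanSpace ℝ (Fin n)} (hy : y ∈ simplexDir v) :
    ∃ lam : Fin (k+1) → ℝ,
      y = ∑ i, lam i • (v i.succ - v 0) ∧ ∀ i, |lam i| ≤ Lam v * ‖y‖ := by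
  classical
  set w : Fin (k+1) → EuclideanSpace ℝ (Fin n) := fun i => v i.succ - v 0 with hwdef
  have hw : LinearIndependent ℝ w := li_w hv
  set b : Module.Basis (Fin (k+1)) ℝ (Submodule.span ℝ (Set.range w)) := Module.Basis.span hw with hbdef
  have hyspan : y ∈ Submodule.span ℝ (Set.range w) := by
    rw [← simplexDir_eq_span v]; exact hy
  set yv : Submodule.span ℝ (Set.range w) := ⟨y, hyspan⟩ with hyvdef
  set lam : Fin (k+1) → ℝ := fun i => b.repr yv i with hlamdef
  have hsum : y = ∑ i, lam i • w i := by
    have h := b.sum_repr yv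
    have hcoe := congrArg (Subtype.val) h
    push_cast at hcoe
    rw [show y = (yv : EuclideanSpace ℝ (Fin n)) from rfl, ← hcoe]
    refine (Finset.sum_congr rfl (fun j _ => ?_)).symm
    rw [Module.Basis.span_apply]
  refine ⟨lam, hsum, fun i => ?_⟩
  rcases eq_or_ne y 0 with h0 | h0
  · have hl0 : lam i = 0 := by
      have : yv = 0 := Subtype.ext h0
      rw [hlamdef, this]; simp
    rw [hl0, h0]
    simp
  · have hny : (0:ℝ) < ‖y‖ := norm_pos_iff.mpr h0
    set lam' : Fin (k+1) → ℝ := fun i => lam i / ‖y‖ with hlam'def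
    have hsum' : ∑ i, lam' i • w i = ‖y‖⁻¹ • y := by
      have h1 : ∑ i, lam' i • w i = ∑ i, ‖y‖⁻¹ • (lam i • w i) := by
        refine Finset.sum_congr rfl (fun j _ => ?_)
        rw [smul_smul, hlam'def]
        ring_nf
      rw [h1, ← Finset.smul_sum, ← hsum]
    have hn1 : ‖∑ i, lam' i • w i‖ = 1 := by
      rw [hsum', norm_smul, norm_inv, norm_norm, inv_mul_cancel₀ (ne_of_gt hny)]
    have hmem : |lam' i| ∈ {t : ℝ | ∃ lam : Fin (k+1) → ℝ,
        ‖∑ i, lam i • (v i.succ - v 0)‖ = 1 ∧ ∃ i, t = |lam i|} :=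
      ⟨lam', hn1, i, rfl⟩
    have hle : |lam' i| ≤ Lam v := le_csSup (bddAbove_lamSet hv) hmem
    have : |lam i| = |lam' i| * ‖y‖ := by
      rw [hlam'def, abs_div, abs_of_pos hny, div_mul_cancel₀ _ (ne_of_gt hny)]
    rw [this]
    exact mul_le_mul_of_nonneg_right hle (le_of_lt hny) |>.trans (le_refl _)

lemma lam_pos {v : Fin (k+2) → EuclideanSpace ℝ (Fin n)}
    (hv : AffineIndependent ℝ v) : 0 < Lam v := by
  classical
  set w : Fin (k+1) → EuclideanSpace ℝ (Fin n) := fun i => v i.succ - v 0 with hwdef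
  have hw : LinearIndependent ℝ w := li_w hv
  have hw0 : w 0 ≠ 0 := hw.ne_zero 0
  have hnw0 : (0:ℝ) < ‖w 0‖ := norm_pos_iff.mpr hw0
  set lam : Fin (k+1) → ℝ := fun j => if j = 0 then ‖w 0‖⁻¹ else 0 with hlamdef
  have hsum : ∑ i, lam i • w i = ‖w 0‖⁻¹ • w 0 := by
    rw [hlamdef]
    simp [ite_smul, Finset.sum_ite_eq']
  have h1 : ‖∑ i, lam i • (v i.succ - v 0)‖ = 1 := by
    rw [show (∑ i, lam i • (v i.succ - v 0)) = ∑ i, lam i • w i from rfl, hsum,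
      norm_smul, norm_inv, norm_norm, inv_mul_cancel₀ (ne_of_gt hnw0)]
  have hmem : |lam 0| ∈ {t : ℝ | ∃ lam : Fin (k+1) → ℝ,
      ‖∑ i, lam i • (v i.succ - v 0)‖ = 1 ∧ ∃ i, t = |lam i|} := ⟨lam, h1, 0, rfl⟩
  have hle : |lam 0| ≤ Lam v := le_csSup (bddAbove_lamSet hv) hmem
  have : |lam 0| = ‖w 0‖⁻¹ := by rw [hlamdef]; simp [abs_of_pos (inv_pos.mpr hnw0)]
  rw [this] at hle
  exact lt_of_lt_of_le (inv_pos.mpr hnw0) hle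

end Helpers

theorem stmt_6 (n d : ℕ) (hd : d ≤ n) :
    ∃ C₁ > (0:ℝ), ∃ C₂ > (0:ℝ),
      ∀ v : Fin (d+1) → EuclideanSpace ℝ (Fin n), AffineIndependent ℝ v →
        ∀ ζ : ℝ, 0 < ζ → ζ < min (rMin v / 2) (1 / Lam v) →
          (∀ D : Submodule ℝ (EuclideanSpace ℝ (Fin n)), Module.finrank ℝ ↥D = d →
            dProj (simplexDir v) D < C₁ * ζ / rMax v →
            ∃ v' : Fin (d+1) → EuclideanSpace ℝ (Fin n),
              (∀ i, dist (v' i) (v i) < ζ) ∧ AffineIndependent ℝ v' ∧ D = simplexDir v') ∧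
          (∀ v' : Fin (d+1) → EuclideanSpace ℝ (Fin n),
            (∀ i, dist (v' i) (v i) < ζ) → AffineIndependent ℝ v' →
            dProj (simplexDir v) (simplexDir v') < C₂ * ζ * Lam v) := by
  cases d with
  | zero =>
    refine ⟨1, one_pos, 1, one_pos, fun v hv ζ hζ hζlt => ?_⟩
    exfalso
    have hLam : Lam v = 0 := by
      have hempty : {t : ℝ | ∃ lam : Fin 0 → ℝ,
          ‖∑ i, lam i • (v i.succ - v 0)‖ = 1 ∧ ∃ i, t = |lam i|} = (∅ : Set ℝ) := by
        ext t
        simp only [Set.mem_setOf_eq, Set.mem_empty_iff_false, iff_false, not_exists]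
        rintro lam ⟨h1, i, -⟩
        exact i.elim0
      rw [Lam, hempty, Real.sSup_empty]
    have h := hζlt.trans_le (min_le_right _ _)
    rw [hLam] at h
    simp at h
    linarith
  | succ k =>
    refine ⟨1, one_pos, 9*(k:ℝ)+18, by positivity, fun v hv ζ hζ hζlt => ?_⟩
    have hV : Module.finrank ℝ (simplexDir v) = k+1 := finrank_simplexDir hv
    have hL : 0 < Lam v := lam_pos hv
    have hbdd : ∀ i : Fin (k+2), BddAbove (Set.range fun j => dist (v i) (v j)) :=
      fun i => Set.Finite.bddAbove (Set.finite_range _)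
    have hbdd2 : BddAbove (Set.range fun i => ⨆ j, dist (v i) (v j)) :=
      Set.Finite.bddAbove (Set.finite_range _)
    have hdistle : ∀ i j : Fin (k+2), dist (v i) (v j) ≤ rMax v := by
      intro i j
      have h1 : dist (v i) (v j) ≤ ⨆ j, dist (v i) (v j) := le_ciSup (hbdd i) j
      have h2 : (⨆ j, dist (v i) (v j)) ≤ ⨆ i, ⨆ j, dist (v i) (v j) := le_ciSup hbdd2 i
      unfold rMax
      exact h1.trans h2
    have hne : v ((0 : Fin (k+1)).succ) ≠ v 0 := by
      intro h
      exact Fin.succ_ne_zero (0 : Fin (k+1)) (hv.injective h)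
    have hrmaxpos : 0 < rMax v := lt_of_lt_of_le (dist_pos.mpr hne) (hdistle _ _)
    have hζrmin : ζ < rMin v / 2 := hζlt.trans_le (min_le_left _ _)
    have hrminle : rMin v ≤ rMax v := by
      have h1 : rMin v ≤ Metric.infDist (v 0)
          ((affineSpan ℝ (v '' ({(0 : Fin (k+2))}ᶜ))) : Set (EuclideanSpace ℝ (Fin n))) := by
        unfold rMin
        refine ciInf_le ⟨0, ?_⟩ 0
        rintro t ⟨i, rfl⟩
        exact Metric.infDist_nonneg
      have hmem : v ((0 : Fin (k+1)).succ) ∈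
          ((affineSpan ℝ (v '' ({(0 : Fin (k+2))}ᶜ))) : Set (EuclideanSpace ℝ (Fin n))) :=
        subset_affineSpan ℝ _ ⟨(0 : Fin (k+1)).succ, by simp [Fin.succ_ne_zero], rfl⟩
      exact h1.trans ((Metric.infDist_le_dist_of_mem hmem).trans (hdistle _ _))
    have hζrmax : ζ < rMax v / 2 := by linarith
    constructor
    · -- Part (i)
      intro D hDrank hDdist
      rw [one_mul] at hDdist
      have hdp : dProj (simplexDir v) D * rMax v < ζ := (lt_div_iff₀ hrmaxpos).mp hDdist
      have hdpnn : 0 ≤ dProj (simplexDir v) D := norm_nonneg _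
      have hdphalf : dProj (simplexDir v) D < 1/2 := by nlinarith
      have hinj : ∀ y ∈ simplexDir v, projCL D y = 0 → y = 0 := by
        intro y hy h0
        by_contra hne0
        have hpos : 0 < ‖y‖ := norm_pos_iff.mpr hne0
        have h1 : ‖(projCL (simplexDir v) - projCL D) y‖ ≤ dProj (simplexDir v) D * ‖y‖ :=
          (projCL (simplexDir v) - projCL D).le_opNorm y
        rw [ContinuousLinearMap.sub_apply, projCL_of_mem hy, h0, sub_zero] at h1
        nlinarith
      set v' : Fin (k+2) → EuclideanSpace ℝ (Fin n) :=
        fun i => v 0 + projCL D (v i - v 0) with hv'def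
      have hv'0 : v' 0 = v 0 := by simp [hv'def]
      have hv'diff : ∀ i, v' i - v' 0 = projCL D (v i - v 0) := by
        intro i
        rw [hv'0]
        simp only [hv'def]
        exact add_sub_cancel_left _ _
      have hdists : ∀ i, dist (v' i) (v i) < ζ := by
        intro i
        have heq : v' i - v i = (projCL D - projCL (simplexDir v)) (v i - v 0) := by
          rw [ContinuousLinearMap.sub_apply, projCL_of_mem (mem_simplexDir_diff v i)]
          simp only [hv'def]
          abel
        rw [dist_eq_norm, heq]
        have h2 : ‖(projCL D - projCL (simplexDir v)) (v i - v 0)‖ ≤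
            dProj (simplexDir v) D * ‖v i - v 0‖ := by
          have h := (projCL D - projCL (simplexDir v)).le_opNorm (v i - v 0)
          rwa [norm_sub_rev (projCL D)] at h
        have h3 : ‖v i - v 0‖ ≤ rMax v := by
          rw [← dist_eq_norm]
          exact hdistle i 0
        calc ‖(projCL D - projCL (simplexDir v)) (v i - v 0)‖
            ≤ dProj (simplexDir v) D * ‖v i - v 0‖ := h2
          _ ≤ dProj (simplexDir v) D * rMax v := mul_le_mul_of_nonneg_left h3 hdpnn
          _ < ζ := hdp
      have hli0 : LinearIndependent ℝ (fun i : {x : Fin (k+2) // x ≠ 0} => v ↑i -ᵥ v 0) :=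
        (affineIndependent_iff_linearIndependent_vsub ℝ v 0).mp hv
      have hdisj : Disjoint
          (Submodule.span ℝ (Set.range (fun i : {x : Fin (k+2) // x ≠ 0} => v ↑i -ᵥ v 0)))
          (LinearMap.ker (projCL D).toLinearMap) := by
        rw [Submodule.disjoint_def]
        intro x hx1 hx2
        have hxV : x ∈ simplexDir v := by
          have hsub : Submodule.span ℝ
              (Set.range (fun i : {x : Fin (k+2) // x ≠ 0} => v ↑i -ᵥ v 0)) ≤ simplexDir v := by
            rw [Submodule.span_le]
            rintro z ⟨i, rfl⟩
            simpa [vsub_eq_sub] using mem_simplexDir_diff v ↑i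
          exact hsub hx1
        exact hinj x hxV (by simpa using hx2)
      have hli1 := hli0.map (f := (projCL D).toLinearMap) hdisj
      have haff' : AffineIndependent ℝ v' := by
        rw [affineIndependent_iff_linearIndependent_vsub ℝ v' 0]
        have heq : (fun i : {x : Fin (k+2) // x ≠ 0} => v' ↑i -ᵥ v' 0) =
            ((projCL D).toLinearMap ∘ (fun i : {x : Fin (k+2) // x ≠ 0} => v ↑i -ᵥ v 0)) := by
          funext i
          simp only [Function.comp_apply, vsub_eq_sub, ContinuousLinearMap.coe_coe]
          exact hv'diff ↑i
        rw [heq]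
        exact hli1
      have hspan : simplexDir v' = Submodule.map (projCL D).toLinearMap (simplexDir v) := by
        rw [simplexDir_eq_span v', simplexDir_eq_span v]
        have heq : (fun i : Fin (k+1) => v' i.succ - v' 0) =
            ⇑((projCL D).toLinearMap) ∘ (fun i : Fin (k+1) => v i.succ - v 0) := by
          funext i
          simp only [Function.comp_apply, ContinuousLinearMap.coe_coe]
          exact hv'diff i.succ
        rw [heq, Set.range_comp, Submodule.span_image]
      have hrkmap : Module.finrank ℝ
          (Submodule.map (projCL D).toLinearMap (simplexDir v)) = k+1 := by
        have hginj : Function.Injective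
            ((projCL D).toLinearMap.comp (simplexDir v).subtype) := by
          rw [← LinearMap.ker_eq_bot, Submodule.eq_bot_iff]
          rintro ⟨y, hy⟩ h
          have h0 : projCL D y = 0 := by simpa using h
          exact Subtype.ext (hinj y hy h0)
        have h1 := LinearMap.finrank_range_of_inj hginj
        rw [LinearMap.range_comp, Submodule.range_subtype] at h1
        rw [h1]
        exact hV
      have hDeq : Submodule.map (projCL D).toLinearMap (simplexDir v) = D :=
        Submodule.eq_of_le_of_finrank_eq
          (by rintro x ⟨y, hy, rfl⟩; exact projCL_mem D y)
          (by rw [hrkmap, hDrank])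
      exact ⟨v', hdists, haff', by rw [hspan, hDeq]⟩
    · -- Part (ii)
      intro v' hdists haff'
      have hWrank : Module.finrank ℝ (simplexDir v') = k+1 := finrank_simplexDir haff'
      set δ : ℝ := 2*((k:ℝ)+1)*Lam v*ζ with hδdef
      have hδpos : 0 < δ := by
        rw [hδdef]
        have hk1 : (0:ℝ) < (k:ℝ)+1 := by positivity
        exact mul_pos (mul_pos (mul_pos two_pos hk1) hL) hζ
      have hA : ∀ y ∈ simplexDir v, ‖y - projCL (simplexDir v') y‖ ≤ δ * ‖y‖ := by
        intro y hy
        obtain ⟨lam, hsum, hbound⟩ := coords_bound hv hy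
        set y' : EuclideanSpace ℝ (Fin n) := ∑ i, lam i • (v' i.succ - v' 0) with hy'def
        have hy'W : y' ∈ simplexDir v' := by
          rw [simplexDir_eq_span v']
          exact Submodule.sum_mem _ (fun i _ =>
            Submodule.smul_mem _ _ (Submodule.subset_span (mem_range_self i)))
        have hww : ∀ i : Fin (k+1), ‖(v i.succ - v 0) - (v' i.succ - v' 0)‖ ≤ 2*ζ := by
          intro i
          have h1 : dist (v' i.succ) (v i.succ) < ζ := hdists _
          have h0 : dist (v' 0) (v 0) < ζ := hdists 0
          rw [dist_eq_norm] at h1 h0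
          calc ‖(v i.succ - v 0) - (v' i.succ - v' 0)‖
              = ‖(v' 0 - v 0) - (v' i.succ - v i.succ)‖ := by congr 1; abel
            _ ≤ ‖v' 0 - v 0‖ + ‖v' i.succ - v i.succ‖ := norm_sub_le _ _
            _ ≤ 2*ζ := by linarith
        have he1 : y - y' = ∑ i, lam i • ((v i.succ - v 0) - (v' i.succ - v' 0)) := by
          rw [hy'def, hsum, ← Finset.sum_sub_distrib]
          exact Finset.sum_congr rfl (fun i _ => (smul_sub _ _ _).symm)
        have hLnn : 0 ≤ Lam v * ‖y‖ := mul_nonneg (le_of_lt hL) (norm_nonneg y)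
        calc ‖y - projCL (simplexDir v') y‖
            ≤ ‖y - y'‖ := norm_sub_projCL_le _ y hy'W
          _ = ‖∑ i, lam i • ((v i.succ - v 0) - (v' i.succ - v' 0))‖ := by rw [he1]
          _ ≤ ∑ i, ‖lam i • ((v i.succ - v 0) - (v' i.succ - v' 0))‖ := norm_sum_le _ _
          _ ≤ ∑ _i : Fin (k+1), (Lam v * ‖y‖) * (2*ζ) := by
              refine Finset.sum_le_sum (fun i _ => ?_)
              rw [norm_smul, Real.norm_eq_abs]
              exact mul_le_mul (hbound i) (hww i) (norm_nonneg _) hLnn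
          _ = ((k:ℝ)+1) * ((Lam v * ‖y‖) * (2*ζ)) := by
              rw [Finset.sum_const, Finset.card_univ, Fintype.card_fin, nsmul_eq_mul]
              push_cast
              ring
          _ = δ * ‖y‖ := by rw [hδdef]; ring
      by_cases hcase : δ ≤ 1/2
      · have h3 := dProj_le_three_mul (by rw [hV, hWrank]) (le_of_lt hδpos) hcase hA
        have h4 : 3 * δ < (9*(k:ℝ)+18) * ζ * Lam v := by
          rw [hδdef]
          have hk : (0:ℝ) ≤ (k:ℝ) := Nat.cast_nonneg k
          nlinarith [mul_pos hζ hL]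
        linarith
      · push_neg at hcase
        have h2 := dProj_le_two (simplexDir v) (simplexDir v')
        rw [hδdef] at hcase
        have hgt : (2:ℝ) < (9*(k:ℝ)+18) * ζ * Lam v := by
          have hk : (0:ℝ) ≤ (k:ℝ) := Nat.cast_nonneg k
          have hζL : 0 < ζ * Lam v := mul_pos hζ hL
          nlinarith [mul_nonneg hk (le_of_lt hζL)]
        linarith
end
end

section
/- Fix natural numbers k < n and let 𝔉 denote the constant foliation of ℝⁿ = ℝᵏ × ℝ^{n−k} by the translates of ℝᵏ × {0}. Let ε > 0 and d, C ∈ ℕ with 1 ≤ d ≤ n − k, let p ∈ ℝⁿ, and let 𝒟 be a set of C linear simplices in ℝⁿ, each transverse to 𝔉. Then there exist δ > 0 and a point p' ∈ B(p, ε) such that B(p', δ) ⊆ B(p, ε) and for every (d−1)-dimensional simplex Δ ∈ 𝒟 the join p'⋆Δ is a non-degenerate linear d-simplex that is δ-semitransverse to 𝔉 in p'. -/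
noncomputable section

open Metric Set

open MeasureTheory
lemma finrank_stdFol (n k : ℕ) (hk : k ≤ n) : Module.finrank ℝ (stdFol n k) = k := by
  classical
  let L : EuclideanSpace ℝ (Fin n) →ₗ[ℝ] (Fin (n - k) → ℝ) :=
    LinearMap.pi fun j => (EuclideanSpace.proj (⟨k + j.1, by omega⟩ : Fin n) : EuclideanSpace ℝ (Fin n) →L[ℝ] ℝ).toLinearMap
  have hsurj : Function.Surjective L := by
    intro y
    refine ⟨WithLp.toLp 2 (fun i => if h : k ≤ i.1 then y ⟨i.1 - k, by omega⟩ else 0), ?_⟩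
    funext j
    simp only [L, LinearMap.pi_apply, LinearMap.proj_apply]
    show (if h : k ≤ k + j.1 then y ⟨k + j.1 - k, by omega⟩ else 0) = y j
    rw [dif_pos (Nat.le_add_right _ _)]
    congr 1
    apply Fin.ext
    show k + j.1 - k = j.1
    omega
  have hker : LinearMap.ker L = stdFol n k := by
    ext x
    simp only [LinearMap.mem_ker, L]
    constructor
    · intro h i hi
      have h2 := congrFun h ⟨i.1 - k, by omega⟩
      simp only [LinearMap.pi_apply, LinearMap.proj_apply, Pi.zero_apply] at h2
      have h3 : (⟨k + (i.1 - k), by omega⟩ : Fin n) = i := by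
        apply Fin.ext; show k + (i.1 - k) = i.1; omega
      rwa [h3] at h2
    · intro h
      funext j
      exact h _ (by exact Nat.le_add_right _ _)
  have h4 := LinearMap.finrank_range_add_finrank_ker L
  rw [LinearMap.range_eq_top.2 hsurj, hker] at h4
  rw [finrank_top] at h4
  simp only [finrank_euclideanSpace_fin, Module.finrank_pi, Fintype.card_fin] at h4
  omega


lemma finrank_span_sup {n : ℕ} (U : Submodule ℝ (EuclideanSpace ℝ (Fin n)))
    {u : EuclideanSpace ℝ (Fin n)} (hu : u ∉ U) :
    Module.finrank ℝ ↥(Submodule.span ℝ {u} ⊔ U) = Module.finrank ℝ ↥U + 1 := by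
  have hu0 : u ≠ 0 := fun h => hu (h ▸ U.zero_mem)
  have hinf : Submodule.span ℝ {u} ⊓ U = ⊥ := by
    rw [Submodule.eq_bot_iff]
    rintro x ⟨hx1, hx2⟩
    obtain ⟨t, rfl⟩ := Submodule.mem_span_singleton.1 hx1
    rcases eq_or_ne t 0 with rfl | ht
    · simp
    · exact absurd (by simpa [ht] using U.smul_mem t⁻¹ hx2) hu
  have := Submodule.finrank_sup_add_finrank_inf_eq (Submodule.span ℝ {u}) U
  rw [hinf, finrank_bot, finrank_span_singleton hu0] at this
  omega

-- direction of join simplex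
lemma dir_cons {n m : ℕ} (v : Fin (m+1) → EuclideanSpace ℝ (Fin n))
    (p : EuclideanSpace ℝ (Fin n)) :
    (affineSpan ℝ (Set.range (Fin.cons p v : Fin (m+2) → EuclideanSpace ℝ (Fin n)))).direction
      = Submodule.span ℝ {p - v 0} ⊔ (affineSpan ℝ (Set.range v)).direction := by
  rw [Fin.range_cons, ← affineSpan_insert_affineSpan,
    AffineSubspace.direction_affineSpan_insert (mem_affineSpan ℝ (mem_range_self 0))]
  rfl

lemma ai_cons {n m : ℕ} {v : Fin (m+1) → EuclideanSpace ℝ (Fin n)}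
    (hv : AffineIndependent ℝ v) {p : EuclideanSpace ℝ (Fin n)}
    (hp : p ∉ affineSpan ℝ (Set.range v)) :
    AffineIndependent ℝ (Fin.cons p v : Fin (m+2) → EuclideanSpace ℝ (Fin n)) := by
  apply AffineIndependent.affineIndependent_of_notMem_span (i := 0)
  · have : (fun x : {y : Fin (m+2) // y ≠ 0} => (Fin.cons p v : Fin (m+2) → _) x)
        = v ∘ (fun x : {y : Fin (m+2) // y ≠ 0} => (x : Fin (m+2)).pred x.2) := by
      funext x
      obtain ⟨x, hx⟩ := x
      show (Fin.cons p v : Fin (m+2) → EuclideanSpace ℝ (Fin n)) x = v (x.pred hx)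
      induction x using Fin.cases with
      | zero => exact absurd rfl hx
      | succ j => rw [Fin.cons_succ, Fin.pred_succ]
    rw [this]
    exact hv.comp_embedding ⟨_, fun a b h => Subtype.ext (by
      have h2 : ((a:Fin (m+2)).pred a.2).succ = ((b:Fin (m+2)).pred b.2).succ := congrArg Fin.succ h
      rwa [Fin.succ_pred, Fin.succ_pred] at h2)⟩
  · have himg : (Fin.cons p v : Fin (m+2) → _) '' {x | x ≠ 0} = Set.range v := by
      ext y
      constructor
      · rintro ⟨x, hx, rfl⟩
        refine ⟨x.pred hx, ?_⟩
        induction x using Fin.cases with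
        | zero => exact absurd rfl hx
        | succ j => rw [Fin.pred_succ, Fin.cons_succ]
      · rintro ⟨j, rfl⟩
        exact ⟨j.succ, Fin.succ_ne_zero j, Fin.cons_succ _ _ _⟩
    rw [himg]
    exact hp

theorem stmt_16 (n k d C : ℕ) (hk : k < n) (hd1 : 1 ≤ d) (hd : d ≤ n - k)
    (ε : ℝ) (hε : 0 < ε) (p : EuclideanSpace ℝ (Fin n))
    (dm : Fin C → ℕ) (vs : (c : Fin C) → Fin (dm c + 1) → EuclideanSpace ℝ (Fin n))
    (hAI : ∀ c, AffineIndependent ℝ (vs c))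
    (hT : ∀ c, Transv (simplexDir (vs c)) (stdFol n k)) :
    ∃ δ > (0:ℝ), ∃ p' : EuclideanSpace ℝ (Fin n), dist p' p < ε ∧
      Metric.ball p' δ ⊆ Metric.ball p ε ∧
      ∀ c, dm c + 1 = d → SemiT δ p' (vs c) (stdFol n k) := by
  
  classical
  let E := EuclideanSpace ℝ (Fin n)
  set W := stdFol n k with hW
  have hWk : Module.finrank ℝ ↥W = k := finrank_stdFol n k hk.le
  have hGr : ∀ c : Fin C, Module.finrank ℝ ↥(simplexDir (vs c)) = dm c := by
    intro c
    rw [simplexDir, direction_affineSpan]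
    exact (hAI c).finrank_vectorSpan (Fintype.card_fin _)
  have hU : ∀ c : Fin C, dm c + 1 = d →
      Module.finrank ℝ ↥(simplexDir (vs c) ⊔ W) = dm c + k ∧ simplexDir (vs c) ⊔ W ≠ ⊤ := by
    intro c hc
    have h1 := hT c
    rw [Transv, hGr c, hWk] at h1
    have hmin : min (dm c + k) n = dm c + k := by omega
    rw [hmin] at h1
    refine ⟨h1, fun htop => ?_⟩
    rw [htop, finrank_top, finrank_euclideanSpace_fin] at h1
    omega
  set Bset : Fin C → Set E := fun c =>
    if dm c + 1 = d then (fun x => x - vs c 0) ⁻¹' ((simplexDir (vs c) ⊔ W : Submodule ℝ E) : Set E)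
    else ∅ with hBset
  have hclosed : ∀ c, IsClosed (Bset c) := by
    intro c
    rw [hBset]
    by_cases hc : dm c + 1 = d
    · simp only [hc, if_pos rfl]
      exact (Submodule.closed_of_finiteDimensional _).preimage
        (continuous_id.sub continuous_const)
    · simp only [if_neg hc]
      exact isClosed_empty
  have hnull : volume (⋃ c, Bset c) = 0 := by
    refine measure_iUnion_null fun c => ?_
    rw [hBset]
    by_cases hc : dm c + 1 = d
    · simp only [if_pos hc]
      have h2 : (fun x : E => x - vs c 0) = fun x : E => x + (-(vs c 0)) := by
        funext x; rw [sub_eq_add_neg]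
      rw [h2, measure_preimage_add_right]
      exact Measure.addHaar_submodule _ _ (hU c hc).2
    · simp only [if_neg hc]
      simp
  have hball : volume (ball p ε \ ⋃ c, Bset c) ≠ 0 := by
    intro h0
    have hle : volume (ball p ε) ≤ volume (ball p ε \ ⋃ c, Bset c) + volume (⋃ c, Bset c) :=
      le_trans (measure_mono (subset_diff_union _ _)) (measure_union_le _ _)
    rw [h0, hnull] at hle
    simp only [add_zero, nonpos_iff_eq_zero] at hle
    exact (measure_ball_pos volume p hε).ne' hle
  obtain ⟨p', hp'⟩ := nonempty_of_measure_ne_zero hball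
  obtain ⟨hp'ball, hp'S⟩ := hp'
  have hopen : IsOpen (ball p ε ∩ (⋃ c, Bset c)ᶜ) :=
    isOpen_ball.inter (isClosed_iUnion_of_finite hclosed).isOpen_compl
  obtain ⟨δ, hδ, hsub⟩ := Metric.isOpen_iff.1 hopen p' ⟨hp'ball, hp'S⟩
  refine ⟨δ, hδ, p', mem_ball.1 hp'ball, fun x hx => (hsub hx).1, ?_⟩
  intro c hc p'' hp''
  have hmem : p'' ∈ ball p ε ∩ (⋃ c, Bset c)ᶜ := hsub (mem_ball.2 hp'')
  have hgood : p'' - vs c 0 ∉ (simplexDir (vs c) ⊔ W : Submodule ℝ E) := by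
    intro h
    apply hmem.2
    exact mem_iUnion.2 ⟨c, by rw [hBset]; simp only [if_pos hc]; exact h⟩
  have huGr : p'' - vs c 0 ∉ simplexDir (vs c) := fun h => hgood (Submodule.mem_sup_left h)
  have hpnotin : p'' ∉ affineSpan ℝ (Set.range (vs c)) := by
    intro h
    apply huGr
    have h2 := AffineSubspace.vsub_mem_direction h (mem_affineSpan ℝ (mem_range_self 0))
    rwa [vsub_eq_sub] at h2
  refine ⟨ai_cons (hAI c) hpnotin, ?_⟩
  have hD' : simplexDir (Fin.cons p'' (vs c) : Fin (dm c + 2) → E)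
      = Submodule.span ℝ {p'' - vs c 0} ⊔ simplexDir (vs c) := dir_cons (vs c) p''
  rw [Transv, hD', hWk]
  have hr1 : Module.finrank ℝ ↥(Submodule.span ℝ {p'' - vs c 0} ⊔ simplexDir (vs c))
      = dm c + 1 := by rw [finrank_span_sup _ huGr, hGr c]
  have hr2 : Module.finrank ℝ ↥(Submodule.span ℝ {p'' - vs c 0} ⊔ simplexDir (vs c) ⊔ W)
      = dm c + k + 1 := by
    rw [sup_assoc, finrank_span_sup _ hgood, (hU c hc).1]
  rw [hr1, hr2]
  omega
end
end
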